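/- Every tribe T gives rise to a categorical model of type theory: taking T^{[1]}_f to be the full subcategory of the arrow category T^{[1]} spanned by fibrations, with p = cod and χ the inclusion, the triple (T, T^{[1]}_f, χ) is a comprehension category with strong Σ-types and weakly stable Id-types in which all objects are fibrant. -/

import Mathlib

open CategoryTheory CategoryTheory.Limits

universe v u

namespace Paper

variable {T : Type u} [Category.{v} T]

/-- A morphism is anodyne (w.r.t. a class of fibrations) if it has the left
lifting property against all fibrations. -/
def Anodyne (Fib : MorphismProperty T) : MorphismProperty T :=
  fun _ _ i => ∀ ⦃u w : T⦄ (g : u ⟶ w), Fib g → HasLiftingProperty i g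

/-- A tribe structure on a category `T`. -/
structure TribeStruct (T : Type u) [Category.{v} T] where
  /-- fibrations -/
  Fib : MorphismProperty T
  fib_id : ∀ x : T, Fib (𝟙 x)
  fib_comp : ∀ {x y z : T} (f : x ⟶ y) (g : y ⟶ z), Fib f → Fib g → Fib (f ≫ g)
  /-- (T1): terminal object, all objects fibrant -/
  term : T
  isTerminal : IsTerminal term
  all_fibrant : ∀ x : T, Fib (isTerminal.from x)
  /-- (T2): pullbacks along fibrations exist and fibrations are stable -/
  pullback_exists : ∀ {x y z : T} (f : x ⟶ z) (g : y ⟶ z), Fib g → HasPullback f g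
  fib_stable : ∀ {p x y z : T} {fst : p ⟶ x} {snd : p ⟶ y} {f : x ⟶ z} {g : y ⟶ z},
    IsPullback fst snd f g → Fib g → Fib fst
  /-- (T3): factorization as anodyne followed by fibration -/
  factor : ∀ {x y : T} (f : x ⟶ y), ∃ (z : T) (i : x ⟶ z) (q : z ⟶ y),
    Anodyne Fib i ∧ Fib q ∧ i ≫ q = f
  /-- (T4): anodyne morphisms are stable under pullback along fibrations -/
  anodyne_stable : ∀ {p x y z : T} {fst : p ⟶ x} {snd : p ⟶ y} {f : x ⟶ z} {g : y ⟶ z},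
    IsPullback fst snd f g → Anodyne Fib f → Fib g → Anodyne Fib snd

/-- A path object for `x` in a tribe: a factorization of the diagonal
`x → x × x` as an anodyne morphism followed by a fibration (the product is
presented by an explicit binary product cone). -/
structure PathObject (R : TribeStruct T) (x : T) where
  P : T
  σ : x ⟶ P
  π₀ : P ⟶ x
  π₁ : P ⟶ x
  σ_anodyne : Anodyne R.Fib σ
  σ_π₀ : σ ≫ π₀ = 𝟙 x
  σ_π₁ : σ ≫ π₁ = 𝟙 x
  prod : T
  p₀ : prod ⟶ x
  p₁ : prod ⟶ x
  isProd : IsLimit (BinaryFan.mk p₀ p₁)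
  π : P ⟶ prod
  π_p₀ : π ≫ p₀ = π₀
  π_p₁ : π ≫ p₁ = π₁
  π_fib : R.Fib π

/-- Homotopy of morphisms in a tribe. -/
def Homotopic (R : TribeStruct T) {x y : T} (f g : x ⟶ y) : Prop :=
  ∃ (Po : PathObject R y) (H : x ⟶ Po.P), H ≫ Po.π₀ = f ∧ H ≫ Po.π₁ = g

/-- Homotopy equivalences in a tribe. -/
def IsHtpyEquiv (R : TribeStruct T) {x y : T} (f : x ⟶ y) : Prop :=
  ∃ g : y ⟶ x, Homotopic R (f ≫ g) (𝟙 x) ∧ Homotopic R (g ≫ f) (𝟙 y)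

/-- Homotopy equivalences (= weak equivalences) of a tribe as a morphism property. -/
def hW (R : TribeStruct T) : MorphismProperty T :=
  fun _ _ f => IsHtpyEquiv R f

end Paper

namespace Paper

universe u₂

variable {Ctx : Type u} [Category.{v} Ctx] {Ty : Type u₂} [Category.{v} Ty]

/-- `φ` is a `p`-cartesian morphism. -/
def IsCartesianAt (p : Ty ⥤ Ctx) {X Y : Ty} (φ : X ⟶ Y) : Prop :=
  ∀ (Z : Ty) (ψ : Z ⟶ Y) (g : p.obj Z ⟶ p.obj X), g ≫ p.map φ = p.map ψ →
    ∃! l : Z ⟶ X, l ≫ φ = ψ ∧ p.map l = g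

/-- Fibrations of a comprehension category: morphisms isomorphic to finite
composites of comprehension maps. -/
inductive CompFib (p : Ty ⥤ Ctx) (χ : Ty ⥤ Arrow Ctx) :
    ∀ {x y : Ctx}, (x ⟶ y) → Prop
  | basic (A : Ty) : CompFib p χ (χ.obj A).hom
  | id (x : Ctx) : CompFib p χ (𝟙 x)
  | comp {x y z : Ctx} (f : x ⟶ y) (g : y ⟶ z) :
      CompFib p χ f → CompFib p χ g → CompFib p χ (f ≫ g)
  | iso {x y x' y' : Ctx} (f : x ⟶ y) (g : x' ⟶ y') (e₁ : x ≅ x') (e₂ : y ≅ y')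
      (h : e₁.hom ≫ g = f ≫ e₂.hom) : CompFib p χ f → CompFib p χ g

/-- The fibrations of a comprehension category as a morphism property. -/
def compFibProp (p : Ty ⥤ Ctx) (χ : Ty ⥤ Arrow Ctx) : MorphismProperty Ctx :=
  fun _ _ f => CompFib p χ f

/-- `r : u ⟶ w` (between objects over `Γ`) is stably anodyne over `Γ` if it is
anodyne and all of its pullbacks along morphisms `Δ ⟶ Γ` are anodyne. -/
def StablyAnodyneOver (Fib : MorphismProperty Ctx) {Γ u w : Ctx}
    (pu : u ⟶ Γ) (pw : w ⟶ Γ) (r : u ⟶ w) : Prop :=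
  Anodyne Fib r ∧
  ∀ {Δ u' w' : Ctx} (σ : Δ ⟶ Γ) (fu : u' ⟶ u) (pu' : u' ⟶ Δ)
    (fw : w' ⟶ w) (pw' : w' ⟶ Δ) (r' : u' ⟶ w'),
    IsPullback fu pu' pu σ → IsPullback fw pw' pw σ →
    r' ≫ fw = fu ≫ r → r' ≫ pw' = pu' → Anodyne Fib r'

/-- A categorical model of Martin-Löf type theory with `Σ`- and `Id`-types:
a comprehension category in which all objects are fibrant, with strong
`Σ`-types (with η, i.e. given by composition of comprehensions up to
isomorphism) and weakly stable `Id`-types (encoded by stably anodyne/fibration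
factorizations of relative diagonals of fibrations). -/
structure CategoricalModel (p : Ty ⥤ Ctx) (χ : Ty ⥤ Arrow Ctx) where
  term : Ctx
  isTerminal : Limits.IsTerminal term
  /-- the comprehension functor lives over `p` via the codomain functor -/
  isOver : ∀ A : Ty, (χ.obj A).right = p.obj A
  /-- `χ` is full -/
  full : ∀ {A B : Ty} (f : χ.obj A ⟶ χ.obj B), ∃ g : A ⟶ B, χ.map g = f
  /-- `χ` is faithful -/
  faithful : ∀ {A B : Ty} (f g : A ⟶ B), χ.map f = χ.map g → f = g
  /-- `p` is a Grothendieck fibration -/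
  grothendieck : ∀ (A : Ty) {x : Ctx} (f : x ⟶ p.obj A),
    ∃ (B : Ty) (φ : B ⟶ A) (hB : p.obj B = x),
      IsCartesianAt p φ ∧ p.map φ = eqToHom hB ≫ f
  /-- `χ` sends cartesian morphisms to pullback squares -/
  cart_pullback : ∀ {A B : Ty} (φ : A ⟶ B), IsCartesianAt p φ →
    IsPullback (χ.map φ).left (χ.obj A).hom (χ.obj B).hom (χ.map φ).right
  /-- all objects are fibrant -/
  all_fibrant : ∀ Γ : Ctx, CompFib p χ (isTerminal.from Γ)
  /-- strong `Σ`-types with η -/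
  sigma : ∀ (A B : Ty) (h : (χ.obj B).right = (χ.obj A).left),
    ∃ (S : Ty) (_ : (χ.obj S).right = (χ.obj A).right),
      Nonempty ((χ.obj S) ≅ Arrow.mk ((χ.obj B).hom ≫ eqToHom h ≫ (χ.obj A).hom))
  /-- `Id`-types: the object of the factorization of the relative diagonal -/
  idI : ∀ {x y P : Ctx} (q : x ⟶ y), CompFib p χ q →
    ∀ (p₁ p₂ : P ⟶ x), IsPullback p₁ p₂ q q → Ctx
  /-- reflexivity -/
  idr : ∀ {x y P : Ctx} (q : x ⟶ y) (hq : CompFib p χ q)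
    (p₁ p₂ : P ⟶ x) (hP : IsPullback p₁ p₂ q q), x ⟶ idI q hq p₁ p₂ hP
  /-- the `Id`-fibration -/
  idπ : ∀ {x y P : Ctx} (q : x ⟶ y) (hq : CompFib p χ q)
    (p₁ p₂ : P ⟶ x) (hP : IsPullback p₁ p₂ q q), idI q hq p₁ p₂ hP ⟶ P
  /-- the factorization of the relative diagonal -/
  id_fac : ∀ {x y P : Ctx} (q : x ⟶ y) (hq : CompFib p χ q)
    (p₁ p₂ : P ⟶ x) (hP : IsPullback p₁ p₂ q q),
    idr q hq p₁ p₂ hP ≫ idπ q hq p₁ p₂ hP = hP.lift (𝟙 x) (𝟙 x) (by simp)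
  idπ_fib : ∀ {x y P : Ctx} (q : x ⟶ y) (hq : CompFib p χ q)
    (p₁ p₂ : P ⟶ x) (hP : IsPullback p₁ p₂ q q),
    CompFib p χ (idπ q hq p₁ p₂ hP)
  /-- weak stability: reflexivity maps are stably anodyne -/
  idr_stable : ∀ {x y P : Ctx} (q : x ⟶ y) (hq : CompFib p χ q)
    (p₁ p₂ : P ⟶ x) (hP : IsPullback p₁ p₂ q q),
    StablyAnodyneOver (compFibProp p χ) q (idπ q hq p₁ p₂ hP ≫ p₁ ≫ q)
      (idr q hq p₁ p₂ hP)

end Paper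

namespace Paper

variable {T : Type u} [Category.{v} T]

section AnodyneLemmas

lemma anodyne_comp {F : MorphismProperty T} {x y z : T} {f : x ⟶ y} {g : y ⟶ z}
    (hf : Anodyne F f) (hg : Anodyne F g) : Anodyne F (f ≫ g) := fun _ _ p hp => by
  haveI := hf p hp; haveI := hg p hp; infer_instance

/-- If `r' ≫ m` is anodyne and `m` is a split monomorphism, then `r'` is anodyne
(retract argument). -/
lemma anodyne_cancel {F : MorphismProperty T} {Y X' X : T} (r' : Y ⟶ X') (m : X' ⟶ X)
    (ρ : X ⟶ X') (hρ : m ≫ ρ = 𝟙 X') (hk : Anodyne F (r' ≫ m)) : Anodyne F r' := by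
  intro u w g hg
  haveI := hk g hg
  constructor
  intro f h sq
  have hmρ : m ≫ ρ ≫ h = h := by rw [← Category.assoc, hρ, Category.id_comp]
  have sq2 : CommSq f (r' ≫ m) g (ρ ≫ h) :=
    ⟨by rw [Category.assoc, hmρ, sq.w]⟩
  exact ⟨⟨⟨m ≫ sq2.lift,
    by rw [← Category.assoc, sq2.fac_left],
    by rw [Category.assoc, sq2.fac_right, hmρ]⟩⟩⟩

/-- The key stability lemma: anodyne morphisms between fibrations over a common base
are stable under base change along arbitrary morphisms of the base. -/
lemma anodyne_base_change (R : TribeStruct T) {Γ u w : T} (pu : u ⟶ Γ) (pw : w ⟶ Γ)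
    (r : u ⟶ w) (hpu : R.Fib pu) (hpw : R.Fib pw) (hr : Anodyne R.Fib r)
    (hcomm : r ≫ pw = pu)
    {Δ u' w' : T} (σ : Δ ⟶ Γ) (fu : u' ⟶ u) (pu' : u' ⟶ Δ) (fw : w' ⟶ w) (pw' : w' ⟶ Δ)
    (r' : u' ⟶ w') (hu : IsPullback fu pu' pu σ) (hw : IsPullback fw pw' pw σ)
    (h1 : r' ≫ fw = fu ≫ r) (h2 : r' ≫ pw' = pu') : Anodyne R.Fib r' := by
  obtain ⟨Δ₂, j, t, hj, ht, hjt⟩ := R.factor σ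
  haveI : HasPullback pu t := R.pullback_exists pu t ht
  haveI : HasPullback pw t := R.pullback_exists pw t ht
  set fᵤ : pullback pu t ⟶ u := pullback.fst pu t with hfu_def
  set pᵤ : pullback pu t ⟶ Δ₂ := pullback.snd pu t with hpu_def
  set fw₂ : pullback pw t ⟶ w := pullback.fst pw t with hfw_def
  set p_w : pullback pw t ⟶ Δ₂ := pullback.snd pw t with hpw_def
  have hU : IsPullback fᵤ pᵤ pu t := IsPullback.of_hasPullback pu t
  have hW : IsPullback fw₂ p_w pw t := IsPullback.of_hasPullback pw t
  have hrw : (fᵤ ≫ r) ≫ pw = pᵤ ≫ t := by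
    rw [Category.assoc, hcomm]; exact pullback.condition
  set r_t : pullback pu t ⟶ pullback pw t := pullback.lift (fᵤ ≫ r) pᵤ hrw with hrt_def
  have hrt_fst : r_t ≫ fw₂ = fᵤ ≫ r := pullback.lift_fst _ _ _
  have hrt_snd : r_t ≫ p_w = pᵤ := pullback.lift_snd _ _ _
  have hFib_fw₂ : R.Fib fw₂ := R.fib_stable hW ht
  have hFib_pw2 : R.Fib p_w := R.fib_stable hW.flip hpw
  have hFib_pu2 : R.Fib pᵤ := R.fib_stable hU.flip hpu
  have hFib_pw' : R.Fib pw' := R.fib_stable hw.flip hpw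
  -- the pulled-back anodyne map over Δ₂
  have hbig : IsPullback fᵤ (r_t ≫ p_w) (r ≫ pw) t := by
    rw [hrt_snd, hcomm]; exact hU
  have hrt_sq : IsPullback fᵤ r_t r fw₂ := hbig.of_bot hrt_fst.symm hW
  have hrt_an : Anodyne R.Fib r_t := R.anodyne_stable hrt_sq hr hFib_fw₂
  -- the comparison maps into the Δ₂-pullbacks
  have hfww : fw ≫ pw = (pw' ≫ j) ≫ t := by
    rw [hw.w, Category.assoc, hjt]
  set m : w' ⟶ pullback pw t := hW.lift fw (pw' ≫ j) hfww with hm_def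
  have hm_fst : m ≫ fw₂ = fw := hW.lift_fst _ _ _
  have hm_snd : m ≫ p_w = pw' ≫ j := hW.lift_snd _ _ _
  have hfuu : fu ≫ pu = (pu' ≫ j) ≫ t := by
    rw [hu.w, Category.assoc, hjt]
  set mᵤ : u' ⟶ pullback pu t := hU.lift fu (pu' ≫ j) hfuu with hmu_def
  have hmu_fst : mᵤ ≫ fᵤ = fu := hU.lift_fst _ _ _
  have hmu_snd : mᵤ ≫ pᵤ = pu' ≫ j := hU.lift_snd _ _ _
  -- `m` is anodyne, being the pullback of `j` along a fibration
  have hmbig : IsPullback (m ≫ fw₂) pw' pw (j ≫ t) := by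
    rw [hm_fst, hjt]; exact hw
  have hm_sq : IsPullback m pw' p_w j := hmbig.of_right hm_snd hW
  have hm_an : Anodyne R.Fib m := R.anodyne_stable hm_sq.flip hj hFib_pw2
  have hmubig : IsPullback (mᵤ ≫ fᵤ) pu' pu (j ≫ t) := by
    rw [hmu_fst, hjt]; exact hu
  have hmu_sq : IsPullback mᵤ pu' pᵤ j := hmubig.of_right hmu_snd hU
  have hmu_an : Anodyne R.Fib mᵤ := R.anodyne_stable hmu_sq.flip hj hFib_pu2
  -- a retraction of `j`
  have sqj : CommSq (𝟙 Δ) j (R.isTerminal.from Δ) (R.isTerminal.from Δ₂) :=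
    ⟨R.isTerminal.hom_ext _ _⟩
  haveI := hj (R.isTerminal.from Δ) (R.all_fibrant Δ)
  have hρj : j ≫ sqj.lift = 𝟙 Δ := sqj.fac_left
  -- a retraction of `m`
  have sqm : CommSq (𝟙 w') m pw' (p_w ≫ sqj.lift) :=
    ⟨by rw [Category.id_comp, ← Category.assoc, hm_snd, Category.assoc, hρj,
      Category.comp_id]⟩
  haveI := hm_an pw' hFib_pw'
  have hρm : m ≫ sqm.lift = 𝟙 w' := sqm.fac_left
  -- `r' ≫ m = mᵤ ≫ r_t`
  have key : r' ≫ m = mᵤ ≫ r_t := by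
    apply hW.hom_ext
    · rw [Category.assoc, Category.assoc, hm_fst, hrt_fst, h1, ← Category.assoc, hmu_fst]
    · rw [Category.assoc, Category.assoc, hm_snd, hrt_snd, hmu_snd, ← Category.assoc, h2]
  have hk : Anodyne R.Fib (r' ≫ m) := by
    rw [key]; exact anodyne_comp hmu_an hrt_an
  exact anodyne_cancel r' m sqm.lift hρm hk

end AnodyneLemmas

section Model

/-- The type category of a tribe: fibrations, as a full subcategory of arrows. -/
abbrev TyR (R : TribeStruct T) := ObjectProperty.FullSubcategory (fun f : Arrow T => R.Fib f.hom)

/-- The comprehension functor of a tribe. -/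
abbrev χR (R : TribeStruct T) : TyR R ⥤ Arrow T := ObjectProperty.ι _

/-- The projection functor of a tribe's comprehension category. -/
abbrev pR (R : TribeStruct T) : TyR R ⥤ T := χR R ⋙ Arrow.rightFunc

variable (R : TribeStruct T)

lemma fib_iso_hom {x y : T} (e : x ≅ y) : R.Fib e.hom := by
  have sq : CommSq e.hom e.hom (𝟙 y) (𝟙 y) := ⟨rfl⟩
  exact R.fib_stable (IsPullback.of_horiz_isIso sq) (R.fib_id y)

lemma fib_eqToHom {x y : T} (h : x = y) : R.Fib (eqToHom h) := by
  subst h; rw [eqToHom_refl]; exact R.fib_id x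

lemma fib_of_compFib {x y : T} {f : x ⟶ y} (h : CompFib (pR R) (χR R) f) : R.Fib f := by
  induction h with
  | basic A => exact A.property
  | id x => exact R.fib_id x
  | comp f g _ _ hf hg => exact R.fib_comp f g hf hg
  | iso f g e₁ e₂ hsq _ hf =>
      have : g = e₁.inv ≫ f ≫ e₂.hom := by rw [← hsq, Iso.inv_hom_id_assoc]
      rw [this]
      exact R.fib_comp _ _ (fib_iso_hom R e₁.symm) (R.fib_comp _ _ hf (fib_iso_hom R e₂))

lemma compFib_of_fib {x y : T} {f : x ⟶ y} (h : R.Fib f) : CompFib (pR R) (χR R) f :=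
  CompFib.basic (p := pR R) (χ := χR R) ⟨Arrow.mk f, h⟩

/-- Chosen factorization: the intermediate object. -/
noncomputable def facObj {x y : T} (f : x ⟶ y) : T := (R.factor f).choose

/-- Chosen factorization: the anodyne part. -/
noncomputable def facI {x y : T} (f : x ⟶ y) : x ⟶ facObj R f :=
  (R.factor f).choose_spec.choose

/-- Chosen factorization: the fibration part. -/
noncomputable def facQ {x y : T} (f : x ⟶ y) : facObj R f ⟶ y :=
  (R.factor f).choose_spec.choose_spec.choose

lemma facI_anodyne {x y : T} (f : x ⟶ y) : Anodyne R.Fib (facI R f) :=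
  (R.factor f).choose_spec.choose_spec.choose_spec.1

lemma facQ_fib {x y : T} (f : x ⟶ y) : R.Fib (facQ R f) :=
  (R.factor f).choose_spec.choose_spec.choose_spec.2.1

lemma fac_w {x y : T} (f : x ⟶ y) : facI R f ≫ facQ R f = f :=
  (R.factor f).choose_spec.choose_spec.choose_spec.2.2

set_option maxRecDepth 4000 in
/-- The categorical model associated to a tribe. -/
noncomputable def mkModel : CategoricalModel (pR R) (χR R) where
  term := R.term
  isTerminal := R.isTerminal
  isOver _ := rfl
  full f := ⟨⟨f⟩, rfl⟩
  faithful _ _ h := InducedCategory.hom_ext h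
  grothendieck A x f := by
    haveI : HasPullback f A.obj.hom := R.pullback_exists f A.obj.hom A.property
    refine ⟨⟨Arrow.mk (pullback.fst f A.obj.hom),
      R.fib_stable (IsPullback.of_hasPullback f A.obj.hom) A.property⟩,
      ⟨⟨pullback.snd f A.obj.hom, f, (pullback.condition (f := f) (g := A.obj.hom)).symm⟩⟩, rfl, ?_,
      by exact (Category.id_comp f).symm⟩
    intro Z ψ g hg
    have hg' : g ≫ f = ψ.hom.right := hg
    have hw : (Z.obj.hom ≫ g) ≫ f = ψ.hom.left ≫ A.obj.hom := by
      exact (Category.assoc _ _ _).trans ((congrArg (Z.obj.hom ≫ ·) hg').trans ψ.hom.w.symm)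
    refine ⟨⟨⟨pullback.lift (Z.obj.hom ≫ g) ψ.hom.left hw, g,
      pullback.lift_fst (f := f) (g := A.obj.hom) (Z.obj.hom ≫ g) ψ.hom.left hw⟩⟩, ⟨?_, rfl⟩, ?_⟩
    · exact InducedCategory.hom_ext (CommaMorphism.ext (pullback.lift_snd _ _ _) hg')
    · rintro l' ⟨hl1, hl2⟩
      have hl2' : l'.hom.right = g := hl2
      refine InducedCategory.hom_ext (CommaMorphism.ext ?_ hl2')
      apply pullback.hom_ext
      · have hw2 : l'.hom.left ≫ pullback.fst f A.obj.hom = Z.obj.hom ≫ l'.hom.right := l'.hom.w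
        exact hw2.trans ((congrArg (Z.obj.hom ≫ ·) hl2').trans
          (pullback.lift_fst (f := f) (g := A.obj.hom) _ _ hw).symm)
      · refine Eq.trans ?_ (pullback.lift_snd (f := f) (g := A.obj.hom) _ _ hw).symm
        exact congrArg (fun k => k.hom.left) hl1
  cart_pullback {A B} φ hφ := by
    have comm : φ.hom.left ≫ B.obj.hom = A.obj.hom ≫ φ.hom.right := Arrow.w φ.hom
    have spec : ∀ s : PullbackCone B.obj.hom φ.hom.right,
        ∃! l : (⟨Arrow.mk (𝟙 s.pt), R.fib_id s.pt⟩ : TyR R) ⟶ A,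
          l ≫ φ = (⟨⟨s.fst, s.snd ≫ φ.hom.right, by
              show s.fst ≫ B.obj.hom = 𝟙 s.pt ≫ s.snd ≫ φ.hom.right
              rw [Category.id_comp]; exact s.condition⟩⟩ :
            (⟨Arrow.mk (𝟙 s.pt), R.fib_id s.pt⟩ : TyR R) ⟶ B) ∧
            (pR R).map l = s.snd :=
      fun s => hφ ⟨Arrow.mk (𝟙 s.pt), R.fib_id s.pt⟩ _ s.snd rfl
    refine IsPullback.of_isLimit (PullbackCone.IsLimit.mk comm
      (fun s => ((spec s).choose).hom.left) ?_ ?_ ?_)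
    · intro s
      exact congrArg (fun k => k.hom.left) (spec s).choose_spec.1.1
    · intro s
      have hw : ((spec s).choose).hom.left ≫ A.obj.hom
          = 𝟙 s.pt ≫ ((spec s).choose).hom.right := ((spec s).choose).hom.w
      have hr : ((spec s).choose).hom.right = s.snd := (spec s).choose_spec.1.2
      rw [hw, Category.id_comp, hr]
    · intro s m hm1 hm2
      have heq : (⟨⟨m, s.snd, by
          show m ≫ A.obj.hom = 𝟙 s.pt ≫ s.snd
          rw [Category.id_comp]; exact hm2⟩⟩ :
          (⟨Arrow.mk (𝟙 s.pt), R.fib_id s.pt⟩ : TyR R) ⟶ A) = (spec s).choose :=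
        (spec s).choose_spec.2 _ ⟨InducedCategory.hom_ext (CommaMorphism.ext hm1 rfl), rfl⟩
      exact congrArg (fun k => k.hom.left) heq
  all_fibrant Γ := compFib_of_fib R (R.all_fibrant Γ)
  sigma A B h := by
    refine ⟨⟨Arrow.mk (B.obj.hom ≫ eqToHom h ≫ A.obj.hom),
      R.fib_comp _ _ B.property (R.fib_comp _ _ (fib_eqToHom R h) A.property)⟩,
      rfl, ⟨Iso.refl _⟩⟩
  idI {x y P} q hq p₁ p₂ hP := facObj R (hP.lift (𝟙 x) (𝟙 x) (by simp))
  idr {x y P} q hq p₁ p₂ hP := facI R (hP.lift (𝟙 x) (𝟙 x) (by simp))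
  idπ {x y P} q hq p₁ p₂ hP := facQ R (hP.lift (𝟙 x) (𝟙 x) (by simp))
  id_fac {x y P} q hq p₁ p₂ hP := fac_w R _
  idπ_fib {x y P} q hq p₁ p₂ hP := compFib_of_fib R (facQ_fib R _)
  idr_stable {x y P} q hq p₁ p₂ hP := by
    set δ := hP.lift (𝟙 x) (𝟙 x) (by simp) with hδ
    have hq' : R.Fib q := fib_of_compFib R hq
    have hp₁ : R.Fib p₁ := R.fib_stable hP hq'
    have hpw : R.Fib (facQ R δ ≫ p₁ ≫ q) :=
      R.fib_comp _ _ (facQ_fib R δ) (R.fib_comp _ _ hp₁ hq')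
    have hcomm : facI R δ ≫ facQ R δ ≫ p₁ ≫ q = q := by
      rw [← Category.assoc, fac_w, ← Category.assoc, hP.lift_fst, Category.id_comp]
    constructor
    · intro a b g hg
      exact facI_anodyne R δ g (fib_of_compFib R hg)
    · intro Δ u' w' σ fu pu' fw pw' r' h1 h2 h3 h4
      intro a b g hg
      exact anodyne_base_change R q (facQ R δ ≫ p₁ ≫ q) (facI R δ) hq' hpw
        (facI_anodyne R δ) hcomm σ fu pu' fw pw' r' h1 h2 h3 h4 g (fib_of_compFib R hg)

end Model

end Paper

open Paper in
/-- Every tribe `T` gives rise to a categorical model of type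
theory: with `T^{[1]}_f` the full subcategory of the arrow category spanned by
the fibrations, `χ` the inclusion and `p = cod ∘ χ`, the triple
`(T, T^{[1]}_f, χ)` is a comprehension category with strong `Σ`-types and
weakly stable `Id`-types in which all objects are fibrant. -/
theorem tribe_gives_categoricalModel
    {T : Type u} [Category.{v} T] (R : Paper.TribeStruct T) :
    Nonempty (Paper.CategoricalModel
      (Ctx := T) (Ty := CategoryTheory.ObjectProperty.FullSubcategory (fun f : Arrow T => R.Fib f.hom))
      (CategoryTheory.ObjectProperty.ι _ ⋙ Arrow.rightFunc)
      (CategoryTheory.ObjectProperty.ι _)) :=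
  ⟨Paper.mkModel R⟩
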